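/- Let (Γ, c₀, c₁, …, c_r, t) be a decorated cactus, let 1 ≤ i ≤ r, write s := N ∘ ι, and let l_i + 1 = #c_i. Fix f₀ ∈ c_i and set f_j := s^j(f₀) for 0 ≤ j ≤ l_i (so c_i = {f₀, …, f_{l_i}} and each ι(f_j) ∈ c₀). For a, b ∈ c₀ let d(a, b) be the least integer k ≥ 1 with s^k(a) = b. Then Σ_{j=0}^{l_i−1} d(ι(f_{j+1}), ι(f_j)) + d(ι(f₀), ι(f_{l_i})) = #c₀. (This expresses that ι(f₀) > ι(f₁) > ⋯ > ι(f_{l_i}) > ι(f₀) with respect to the cyclic order on the cycle c₀ defined by f < s(f).) -/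
import Mathlib


open scoped Classical

/-- A *decorated cactus* (Definition 8.1 of the paper): a connected ribbon graph `Γ`
of genus `0`, together with cycles `c 0, c 1, …, c r` (orbits of `rot ∘ inv` on the
set of flags) whose disjoint union is the set of flags, such that every pair
`{f, inv f}` meets `c 0` in exactly one flag, and a distinguished tail `tail`.

* `V` is the (finite) set of vertices, `F` the (finite) set of flags;
* `lam : F → V` assigns to a flag its vertex, `inv` is the involution `ι`
  (whose non-fixed orbits are the edges, and whose fixed points are the tails);
* `rot : F ≃ F` is the ribbon structure `N`, preserving `lam` and acting
  transitively on every fiber of `lam`;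
* connectivity is phrased via walks of edges, and genus `0` via
  `#V + #cycles = #edges + 2` (i.e. `2 - 2g = #V - #E + #cycles` with `g = 0`). -/
structure DecoratedCactus (r : ℕ) : Type 1 where
  V : Type
  F : Type
  [finV : Fintype V]
  [finF : Fintype F]
  [decV : DecidableEq V]
  [decF : DecidableEq F]
  lam : F → V
  inv : F → F
  inv_invol : ∀ f, inv (inv f) = f
  rot : F ≃ F
  lam_rot : ∀ f, lam (rot f) = lam f
  rot_trans : ∀ f g : F, lam f = lam g → ∃ n : ℕ, (fun x => rot x)^[n] f = g
  conn : Nonempty V ∧ ∀ v w : V,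
    Relation.ReflTransGen (fun a b => ∃ f, inv f ≠ f ∧ lam f = a ∧ lam (inv f) = b) v w
  genus_zero :
    Fintype.card V +
      (Finset.univ.image (fun f : F =>
        Finset.univ.filter (fun g : F => ∃ n : ℕ, (fun x => rot (inv x))^[n] f = g))).card =
    ((Finset.univ.filter (fun f : F => inv f ≠ f)).image (fun f => s(f, inv f))).card + 2
  c : Fin (r + 1) → Set F
  c_cycle : ∀ i, ∃ f : F, c i = {g | ∃ n : ℕ, (fun x => rot (inv x))^[n] f = g}
  c_disj : ∀ i j, i ≠ j → c i ∩ c j = ∅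
  c_cover : (⋃ i, c i) = (Set.univ : Set F)
  flag_c0 : ∀ f : F, ({f, inv f} ∩ c 0 : Set F).encard = 1
  tail : F
  tail_tail : inv tail = tail

attribute [instance] DecoratedCactus.finV DecoratedCactus.finF
  DecoratedCactus.decV DecoratedCactus.decF

/-- For two flags `a, b` in the same cycle of `s = rot ∘ inv`, the first-passage
distance `d(a,b)`: the least `m ≥ 1` with `s^[m] a = b`. -/
noncomputable def DecoratedCactus.firstPassage {r : ℕ} (d : DecoratedCactus r)
    (a b : d.F) : ℕ :=
  sInf {m : ℕ | 1 ≤ m ∧ (fun x => d.rot (d.inv x))^[m] a = b}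

namespace DecoratedCactus

open Function Finset

variable {r : ℕ} (d : DecoratedCactus r)

/-- The permutation `s = N ∘ ι` on flags. -/
def sf : d.F → d.F := fun x => d.rot (d.inv x)

lemma sf_def : (fun x => d.rot (d.inv x)) = d.sf := rfl

lemma sf_inj : Function.Injective d.sf := by
  intro a b h
  have h1 : d.inv a = d.inv b := d.rot.injective h
  have := congrArg d.inv h1
  rwa [d.inv_invol, d.inv_invol] at this

lemma inv_inj : Function.Injective d.inv := by
  intro a b h
  have := congrArg d.inv h
  rwa [d.inv_invol, d.inv_invol] at this

/-- a global period for `sf`. -/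
lemma exists_period : ∃ N : ℕ, 0 < N ∧ ∀ x : d.F, d.sf^[N] x = x := by
  have hbij : Function.Bijective d.sf := Finite.injective_iff_bijective.mp d.sf_inj
  set p : Equiv.Perm d.F := Equiv.ofBijective _ hbij with hp
  have hpow : ∀ (k : ℕ) (x : d.F), (p ^ k) x = d.sf^[k] x := by
    intro k
    induction k with
    | zero => simp
    | succ k ih =>
      intro x
      rw [pow_succ, Equiv.Perm.mul_apply, iterate_succ_apply]
      exact ih (d.sf x)
  refine ⟨orderOf p, orderOf_pos p, fun x => ?_⟩
  rw [← hpow, pow_orderOf_eq_one p, Equiv.Perm.one_apply]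

/-- reachability by iterates of `sf`. -/
def reach (a b : d.F) : Prop := ∃ m : ℕ, d.sf^[m] a = b

lemma reach_refl (a : d.F) : d.reach a a := ⟨0, rfl⟩

lemma reach_trans {a b c : d.F} (h1 : d.reach a b) (h2 : d.reach b c) : d.reach a c := by
  obtain ⟨m, hm⟩ := h1; obtain ⟨k, hk⟩ := h2
  exact ⟨k + m, by rw [iterate_add_apply, hm, hk]⟩

lemma iterate_mul_period (N : ℕ) (hN : ∀ x : d.F, d.sf^[N] x = x) :
    ∀ (j : ℕ) (x : d.F), d.sf^[N * j] x = x := by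
  intro j
  induction j with
  | zero => simp
  | succ j ih =>
    intro x
    rw [Nat.mul_succ, iterate_add_apply, hN, ih]

lemma reach_symm {a b : d.F} (h : d.reach a b) : d.reach b a := by
  obtain ⟨N, hN0, hN⟩ := d.exists_period
  obtain ⟨m, hm⟩ := h
  refine ⟨N * (m + 1) - m, ?_⟩
  rw [← hm, ← iterate_add_apply]
  have hge : m ≤ N * (m + 1) := by nlinarith
  rw [Nat.sub_add_cancel hge]
  exact d.iterate_mul_period N hN (m+1) a

lemma exists_mem_c (f : d.F) : ∃ i, f ∈ d.c i := by
  have : f ∈ (⋃ i, d.c i) := by rw [d.c_cover]; trivial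
  exact Set.mem_iUnion.mp this

lemma c_unique {f : d.F} {i j : Fin (r+1)} (hi : f ∈ d.c i) (hj : f ∈ d.c j) : i = j := by
  by_contra hne
  have := d.c_disj i j hne
  have : f ∈ d.c i ∩ d.c j := ⟨hi, hj⟩
  rw [d.c_disj i j hne] at this
  exact this

lemma c_eq_orbit {i : Fin (r+1)} {f : d.F} (hf : f ∈ d.c i) :
    d.c i = {g | d.reach f g} := by
  obtain ⟨g₀, hg₀⟩ := d.c_cycle i
  have hreach : d.reach g₀ f := by rw [hg₀] at hf; exact hf
  rw [hg₀]
  ext x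
  constructor
  · intro hx
    exact d.reach_trans (d.reach_symm hreach) hx
  · intro hx
    exact d.reach_trans hreach hx

lemma sf_mem {i : Fin (r+1)} {f : d.F} (hf : f ∈ d.c i) : d.sf f ∈ d.c i := by
  rw [d.c_eq_orbit hf]
  exact ⟨1, rfl⟩

lemma iterate_mem {i : Fin (r+1)} {f : d.F} (hf : f ∈ d.c i) (k : ℕ) :
    d.sf^[k] f ∈ d.c i := by
  rw [d.c_eq_orbit hf]
  exact ⟨k, rfl⟩

end DecoratedCactus

namespace DecoratedCactus

open Function Finset

variable {r : ℕ} (d : DecoratedCactus r)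

lemma tail_mem_c0 {f : d.F} (h : d.inv f = f) : f ∈ d.c 0 := by
  obtain ⟨a, ha⟩ := Set.encard_eq_one.mp (d.flag_c0 f)
  have hamem : a ∈ ({f, d.inv f} ∩ d.c 0 : Set d.F) := by rw [ha]; rfl
  obtain ⟨hm, hc⟩ := hamem
  rcases hm with hm | hm <;> subst hm
  · exact hc
  · rwa [h] at hc

lemma inv_mem_c0 {f : d.F} (h : f ∉ d.c 0) : d.inv f ∈ d.c 0 := by
  obtain ⟨a, ha⟩ := Set.encard_eq_one.mp (d.flag_c0 f)
  have hamem : a ∈ ({f, d.inv f} ∩ d.c 0 : Set d.F) := by rw [ha]; rfl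
  obtain ⟨hm, hc⟩ := hamem
  rcases hm with hm | hm <;> subst hm
  · exact absurd hc h
  · exact hc

lemma inv_notMem_c0 {f : d.F} (hf : f ∈ d.c 0) (h : d.inv f ≠ f) : d.inv f ∉ d.c 0 := by
  intro hinv
  obtain ⟨a, ha⟩ := Set.encard_eq_one.mp (d.flag_c0 f)
  have h1 : f ∈ ({f, d.inv f} ∩ d.c 0 : Set d.F) := ⟨Or.inl rfl, hf⟩
  have h2 : d.inv f ∈ ({f, d.inv f} ∩ d.c 0 : Set d.F) := ⟨Or.inr rfl, hinv⟩
  rw [ha] at h1 h2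
  exact h (h2.trans h1.symm)

lemma mem_periodic (x : d.F) : x ∈ periodicPts d.sf := by
  obtain ⟨N, hN0, hN⟩ := d.exists_period
  exact mk_mem_periodicPts hN0 (hN x)

lemma minimalPeriod_pos (x : d.F) : 0 < minimalPeriod d.sf x :=
  minimalPeriod_pos_of_mem_periodicPts (d.mem_periodic x)

lemma orbit_eq_image (f : d.F) :
    {g | d.reach f g} =
      ↑((Finset.range (minimalPeriod d.sf f)).image (fun m => d.sf^[m] f)) := by
  ext x
  simp only [Finset.coe_image, Set.mem_image, Finset.coe_range, Set.mem_Iio,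
    Set.mem_setOf_eq]
  constructor
  · rintro ⟨m, hm⟩
    exact ⟨m % minimalPeriod d.sf f,
      Nat.mod_lt _ (d.minimalPeriod_pos f), by rw [iterate_mod_minimalPeriod_eq]; exact hm⟩
  · rintro ⟨m, _, hm⟩
    exact ⟨m, hm⟩

lemma orbit_ncard (f : d.F) : {g | d.reach f g}.ncard = minimalPeriod d.sf f := by
  rw [d.orbit_eq_image f, Set.ncard_coe_finset]
  rw [Finset.card_image_of_injOn, Finset.card_range]
  intro a ha b hb hab
  exact iterate_injOn_Iio_minimalPeriod (by simpa using ha) (by simpa using hb) hab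

lemma minPeriod_eq {i : Fin (r+1)} {f : d.F} (hf : f ∈ d.c i) :
    minimalPeriod d.sf f = (d.c i).ncard := by
  rw [d.c_eq_orbit hf, d.orbit_ncard f]

lemma n_pos : 0 < (d.c 0).ncard := by
  obtain ⟨g₀, hg₀⟩ := d.c_cycle 0
  have hg : g₀ ∈ d.c 0 := by rw [hg₀]; exact ⟨0, rfl⟩
  rw [← d.minPeriod_eq hg]
  exact d.minimalPeriod_pos g₀

lemma sf_period_c0 {f : d.F} (hf : f ∈ d.c 0) : d.sf^[(d.c 0).ncard] f = f := by
  rw [← d.minPeriod_eq hf]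
  exact isPeriodicPt_minimalPeriod d.sf f

lemma dvd_of_period {f : d.F} {k : ℕ} (hf : f ∈ d.c 0) (h : d.sf^[k] f = f) :
    (d.c 0).ncard ∣ k := by
  rw [← d.minPeriod_eq hf]
  exact IsPeriodicPt.minimalPeriod_dvd h

lemma firstPassage_def (a b : d.F) :
    d.firstPassage a b = sInf {m : ℕ | 1 ≤ m ∧ d.sf^[m] a = b} := rfl

lemma fp_nonempty {a b : d.F} (ha : a ∈ d.c 0) (hb : b ∈ d.c 0) :
    {m : ℕ | 1 ≤ m ∧ d.sf^[m] a = b}.Nonempty := by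
  have hreach : d.reach a b := by
    have := d.c_eq_orbit ha
    rw [this] at hb
    exact hb
  obtain ⟨m, hm⟩ := hreach
  have := d.n_pos
  refine ⟨m + (d.c 0).ncard, by omega, ?_⟩
  rw [iterate_add_apply, d.sf_period_c0 ha, hm]

lemma fp_spec {a b : d.F} (ha : a ∈ d.c 0) (hb : b ∈ d.c 0) :
    1 ≤ d.firstPassage a b ∧ d.sf^[d.firstPassage a b] a = b := by
  rw [d.firstPassage_def]
  exact Nat.sInf_mem (d.fp_nonempty ha hb)

lemma fp_le {a b : d.F} {k : ℕ} (hk : 1 ≤ k) (h : d.sf^[k] a = b) :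
    d.firstPassage a b ≤ k := by
  rw [d.firstPassage_def]
  exact Nat.sInf_le ⟨hk, h⟩

lemma fp_le_n {a b : d.F} (ha : a ∈ d.c 0) (hb : b ∈ d.c 0) :
    d.firstPassage a b ≤ (d.c 0).ncard := by
  by_contra h
  push_neg at h
  obtain ⟨hu1, hu2⟩ := d.fp_spec ha hb
  have heq : d.firstPassage a b
      = d.firstPassage a b - (d.c 0).ncard + (d.c 0).ncard := by omega
  rw [heq, iterate_add_apply, d.sf_period_c0 ha] at hu2
  have hnp := d.n_pos
  have := d.fp_le (k := d.firstPassage a b - (d.c 0).ncard) (by omega) hu2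
  omega

end DecoratedCactus

namespace DecoratedCactus

open Function Finset

variable {r : ℕ} (d : DecoratedCactus r)

/-- base-point position in `c 0`, valued in `ZMod n`. -/
noncomputable def pos (x : d.F) : ZMod ((d.c 0).ncard) :=
  ((d.firstPassage d.tail x : ℕ) : ZMod ((d.c 0).ncard))

lemma tail_mem : d.tail ∈ d.c 0 := d.tail_mem_c0 d.tail_tail

lemma iterate_cast_eq {y : d.F} {u v : ℕ} (hy : y ∈ d.c 0)
    (h : d.sf^[u] y = d.sf^[v] y) :
    ((u : ℕ) : ZMod ((d.c 0).ncard)) = (v : ℕ) := by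
  wlog huv : u ≤ v generalizing u v
  · exact (this h.symm (by omega)).symm
  have h2 : d.sf^[v - u] (d.sf^[u] y) = d.sf^[u] y := by
    rw [← iterate_add_apply]
    have hvu : v - u + u = v := by omega
    rw [hvu, ← h]
  have hdvd : (d.c 0).ncard ∣ v - u := d.dvd_of_period (d.iterate_mem hy u) h2
  have hc : (((v - u : ℕ)) : ZMod ((d.c 0).ncard)) = 0 :=
    (ZMod.natCast_eq_zero_iff _ _).mpr hdvd
  have hvu : u + (v - u) = v := by omega
  rw [← hvu, Nat.cast_add, hc, add_zero]

lemma fp_pos_decomp {a b : d.F} (ha : a ∈ d.c 0) (hb : b ∈ d.c 0) :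
    ((d.firstPassage a b : ℕ) : ZMod ((d.c 0).ncard)) = d.pos b - d.pos a := by
  obtain ⟨_, h1⟩ := d.fp_spec d.tail_mem ha
  obtain ⟨_, h2⟩ := d.fp_spec d.tail_mem hb
  obtain ⟨_, h3⟩ := d.fp_spec ha hb
  have hiter : d.sf^[d.firstPassage a b + d.firstPassage d.tail a] d.tail
      = d.sf^[d.firstPassage d.tail b] d.tail := by
    rw [iterate_add_apply, h1, h3, h2]
  have := d.iterate_cast_eq d.tail_mem hiter
  rw [Nat.cast_add] at this
  unfold pos
  rw [← this]
  ring

/-- key divisibility: a sum of first passages along a bijection of a subset of `c 0`. -/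
lemma dvd_sum_fp_right (B : Finset d.F) (hB : ∀ x ∈ B, x ∈ d.c 0) (g : d.F → d.F)
    (hgB : ∀ x ∈ B, g x ∈ B) (hginj : ∀ x ∈ B, ∀ y ∈ B, g x = g y → x = y) :
    (d.c 0).ncard ∣ ∑ x ∈ B, d.firstPassage x (g x) := by
  rw [← ZMod.natCast_eq_zero_iff, Nat.cast_sum]
  have hrw : ∀ x ∈ B, ((d.firstPassage x (g x) : ℕ) : ZMod ((d.c 0).ncard))
      = d.pos (g x) - d.pos x := fun x hx =>
    d.fp_pos_decomp (hB x hx) (hB _ (hgB x hx))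
  rw [Finset.sum_congr rfl hrw, Finset.sum_sub_distrib]
  have himg : B.image g = B :=
    Finset.eq_of_subset_of_card_le (fun y hy => by
      obtain ⟨x, hx, hxy⟩ := Finset.mem_image.mp hy
      exact hxy ▸ hgB x hx)
      (le_of_eq (Finset.card_image_of_injOn hginj).symm)
  have : ∑ x ∈ B, d.pos (g x) = ∑ y ∈ B, d.pos y := by
    conv_rhs => rw [← himg]
    rw [Finset.sum_image hginj]
  rw [this, sub_self]

lemma dvd_sum_fp_left (B : Finset d.F) (hB : ∀ x ∈ B, x ∈ d.c 0) (g : d.F → d.F)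
    (hgB : ∀ x ∈ B, g x ∈ B) (hginj : ∀ x ∈ B, ∀ y ∈ B, g x = g y → x = y) :
    (d.c 0).ncard ∣ ∑ x ∈ B, d.firstPassage (g x) x := by
  rw [← ZMod.natCast_eq_zero_iff, Nat.cast_sum]
  have hrw : ∀ x ∈ B, ((d.firstPassage (g x) x : ℕ) : ZMod ((d.c 0).ncard))
      = d.pos x - d.pos (g x) := fun x hx =>
    d.fp_pos_decomp (hB _ (hgB x hx)) (hB x hx)
  rw [Finset.sum_congr rfl hrw, Finset.sum_sub_distrib]
  have himg : B.image g = B :=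
    Finset.eq_of_subset_of_card_le (fun y hy => by
      obtain ⟨x, hx, hxy⟩ := Finset.mem_image.mp hy
      exact hxy ▸ hgB x hx)
      (le_of_eq (Finset.card_image_of_injOn hginj).symm)
  have : ∑ x ∈ B, d.pos (g x) = ∑ y ∈ B, d.pos y := by
    conv_rhs => rw [← himg]
    rw [Finset.sum_image hginj]
  rw [this, sub_self]

/-- the complement identity `d(a, s b) + d(b, a) = n + 1`. -/
lemma fp_comp {a b : d.F} (ha : a ∈ d.c 0) (hb : b ∈ d.c 0) :
    d.firstPassage a (d.sf b) + d.firstPassage b a = (d.c 0).ncard + 1 := by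
  set n := (d.c 0).ncard with hn
  have hnp := d.n_pos
  obtain ⟨hu1, hu2⟩ := d.fp_spec hb ha
  set u := d.firstPassage b a with hudef
  have hun : u ≤ n := d.fp_le_n hb ha
  have hsb : d.sf b ∈ d.c 0 := d.sf_mem hb
  -- upper bound
  have hup : d.sf^[n + 1 - u] a = d.sf b := by
    rw [← hu2, ← iterate_add_apply]
    have : n + 1 - u + u = n + 1 := by omega
    rw [this, iterate_succ_apply', d.sf_period_c0 hb]
  have hle : d.firstPassage a (d.sf b) ≤ n + 1 - u := d.fp_le (by omega) hup
  -- lower bound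
  obtain ⟨hv1, hv2⟩ := d.fp_spec ha hsb
  set v := d.firstPassage a (d.sf b) with hvdef
  have hiter : d.sf^[v + u] b = d.sf^[1] b := by
    rw [iterate_add_apply, hu2, hv2, iterate_one]
  have hcast := d.iterate_cast_eq hb hiter
  have hdvd : n ∣ v + u - 1 := by
    rw [← ZMod.natCast_eq_zero_iff,
      Nat.cast_sub (by omega : 1 ≤ v + u), hcast, sub_self]
  have hge : n ≤ v + u - 1 := Nat.le_of_dvd (by omega) hdvd
  omega

end DecoratedCactus

namespace DecoratedCactus

open Function Finset

variable {r : ℕ} (d : DecoratedCactus r)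

/-- successor along the attached cycle, transported into `c 0`. -/
def tau : d.F → d.F := fun x => d.inv (d.sf (d.inv x))

/-- the first-return map of `rot` to `c 0`. -/
def Rf : d.F → d.F := fun x => if d.inv x = x then d.rot x else d.rot (d.rot x)

lemma tau_inj : Function.Injective d.tau :=
  d.inv_inj.comp (d.sf_inj.comp d.inv_inj)

lemma rot_eq_sf_inv (y : d.F) : d.rot y = d.sf (d.inv y) := by
  show d.rot y = d.rot (d.inv (d.inv y))
  rw [d.inv_invol]

/-- flags outside `c 0` have their partner inside, and membership facts for `tau`. -/
lemma idx_ne_zero {x : d.F} {i : Fin (r+1)} (hx : x ∈ d.c 0) (hnt : d.inv x ≠ x)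
    (hi : d.inv x ∈ d.c i) : i ≠ 0 := by
  intro h0
  subst h0
  exact d.inv_notMem_c0 hx hnt hi

lemma tau_mem {x : d.F} (hx : x ∈ d.c 0) (hnt : d.inv x ≠ x) :
    d.tau x ∈ d.c 0 ∧ d.inv (d.tau x) ≠ d.tau x := by
  obtain ⟨i, hi⟩ := d.exists_mem_c (d.inv x)
  have hi0 : i ≠ 0 := d.idx_ne_zero hx hnt hi
  have hg : d.sf (d.inv x) ∈ d.c i := d.sf_mem hi
  have hgn0 : d.sf (d.inv x) ∉ d.c 0 := fun hmem => hi0 (d.c_unique hg hmem)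
  have htau : d.tau x ∈ d.c 0 := d.inv_mem_c0 hgn0
  refine ⟨htau, fun h => ?_⟩
  have : d.inv (d.tau x) = d.sf (d.inv x) := by
    show d.inv (d.inv (d.sf (d.inv x))) = _
    rw [d.inv_invol]
  rw [this] at h
  rw [← h] at htau
  exact hgn0 htau

lemma inv_tau (x : d.F) : d.inv (d.tau x) = d.sf (d.inv x) := by
  show d.inv (d.inv (d.sf (d.inv x))) = _
  rw [d.inv_invol]

lemma Rf_eq_tail {x : d.F} (h : d.inv x = x) : d.Rf x = d.sf x := by
  unfold Rf
  rw [if_pos h, d.rot_eq_sf_inv, h]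

lemma Rf_eq_nontail {x : d.F} (h : d.inv x ≠ x) : d.Rf x = d.sf (d.tau x) := by
  unfold Rf
  rw [if_neg h, d.rot_eq_sf_inv (d.rot x), d.rot_eq_sf_inv x]
  rw [← d.inv_tau x, d.inv_invol]

lemma Rf_mem {x : d.F} (hx : x ∈ d.c 0) : d.Rf x ∈ d.c 0 := by
  by_cases h : d.inv x = x
  · rw [d.Rf_eq_tail h]
    exact d.sf_mem hx
  · rw [d.Rf_eq_nontail h]
    exact d.sf_mem (d.tau_mem hx h).1

lemma lam_Rf (x : d.F) : d.lam (d.Rf x) = d.lam x := by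
  unfold Rf
  by_cases h : d.inv x = x
  · rw [if_pos h, d.lam_rot]
  · rw [if_neg h, d.lam_rot, d.lam_rot]

lemma rot_notMem_c0 {x : d.F} (hx : x ∈ d.c 0) (hnt : d.inv x ≠ x) :
    d.rot x ∉ d.c 0 := by
  rw [d.rot_eq_sf_inv]
  obtain ⟨i, hi⟩ := d.exists_mem_c (d.inv x)
  have hi0 : i ≠ 0 := d.idx_ne_zero hx hnt hi
  exact fun hmem => hi0 (d.c_unique (d.sf_mem hi) hmem)

lemma Rf_injOn {x y : d.F} (hx : x ∈ d.c 0) (hy : y ∈ d.c 0)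
    (h : d.Rf x = d.Rf y) : x = y := by
  unfold Rf at h
  by_cases h1 : d.inv x = x <;> by_cases h2 : d.inv y = y
  · rw [if_pos h1, if_pos h2] at h
    exact d.rot.injective h
  · rw [if_pos h1, if_neg h2] at h
    have := d.rot.injective h
    exact absurd (this ▸ hx) (d.rot_notMem_c0 hy h2)
  · rw [if_neg h1, if_pos h2] at h
    have := d.rot.injective h
    exact absurd (this.symm ▸ hy) (d.rot_notMem_c0 hx h1)
  · rw [if_neg h1, if_neg h2] at h
    exact d.rot.injective (d.rot.injective h)

lemma fp_tail {x : d.F} (hx : x ∈ d.c 0) (h : d.inv x = x) :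
    d.firstPassage x (d.Rf x) = 1 := by
  rw [d.Rf_eq_tail h]
  have h1 : d.sf^[1] x = d.sf x := rfl
  have hle := d.fp_le (le_refl 1) h1
  have := (d.fp_spec hx (d.sf_mem hx)).1
  omega

lemma fp_nontail {x : d.F} (hx : x ∈ d.c 0) (h : d.inv x ≠ x) :
    d.firstPassage x (d.Rf x) + d.firstPassage (d.tau x) x = (d.c 0).ncard + 1 := by
  rw [d.Rf_eq_nontail h]
  exact d.fp_comp hx (d.tau_mem hx h).1

/-- every vertex has a flag on `c 0`. -/
lemma lam_surj_c0 (v : d.V) : ∃ x, x ∈ d.c 0 ∧ d.lam x = v := by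
  have hex : ∃ f : d.F, d.lam f = v := by
    have h := d.conn.2 v (d.lam d.tail)
    rcases (Relation.ReflTransGen.cases_head h) with heq | ⟨b, ⟨f, _, hf, _⟩, _⟩
    · exact ⟨d.tail, heq.symm⟩
    · exact ⟨f, hf⟩
  obtain ⟨f, hf⟩ := hex
  by_cases hmem : f ∈ d.c 0
  · exact ⟨f, hmem, hf⟩
  · refine ⟨d.rot f, ?_, by rw [d.lam_rot]; exact hf⟩
    rw [d.rot_eq_sf_inv]
    exact d.sf_mem (d.inv_mem_c0 hmem)

end DecoratedCactus

namespace DecoratedCactus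

open Function Finset

variable {r : ℕ} (d : DecoratedCactus r)

noncomputable def C0 : Finset d.F := Finset.univ.filter (· ∈ d.c 0)
noncomputable def TF : Finset d.F := d.C0.filter (fun x => d.inv x = x)
noncomputable def EF0 : Finset d.F := d.C0.filter (fun x => ¬ d.inv x = x)

lemma mem_C0 {x : d.F} : x ∈ d.C0 ↔ x ∈ d.c 0 := by
  unfold C0; simp

lemma mem_EF0 {x : d.F} : x ∈ d.EF0 ↔ x ∈ d.c 0 ∧ d.inv x ≠ x := by
  unfold EF0
  rw [Finset.mem_filter, d.mem_C0]

lemma ncard_c0_eq : (d.c 0).ncard = d.C0.card := by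
  rw [Set.ncard_eq_toFinset_card']
  congr 1
  ext x
  rw [Set.mem_toFinset, d.mem_C0]

lemma card_split : d.C0.card = d.TF.card + d.EF0.card :=
  (Finset.card_filter_add_card_filter_not (s := d.C0)
    (p := fun x => d.inv x = x)).symm

/-- the number of cycles (orbits of `s`) is `r + 1`. -/
lemma card_cycles :
    (Finset.univ.image (fun f : d.F =>
      Finset.univ.filter (fun g : d.F => ∃ n : ℕ, (fun x => d.rot (d.inv x))^[n] f = g))).card
    = r + 1 := by
  have himg : (Finset.univ.image (fun f : d.F =>
      Finset.univ.filter (fun g : d.F => ∃ n : ℕ, (fun x => d.rot (d.inv x))^[n] f = g)))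
      = (Finset.univ : Finset (Fin (r+1))).image
        (fun i => Finset.univ.filter (· ∈ d.c i)) := by
    ext A
    simp only [Finset.mem_image, Finset.mem_univ, true_and]
    constructor
    · rintro ⟨f, rfl⟩
      obtain ⟨i, hi⟩ := d.exists_mem_c f
      refine ⟨i, ?_⟩
      ext g
      simp only [Finset.mem_filter, Finset.mem_univ, true_and]
      rw [d.c_eq_orbit hi]
      rw [d.sf_def]
      rfl
    · rintro ⟨i, rfl⟩
      obtain ⟨f, hf⟩ := d.c_cycle i
      refine ⟨f, ?_⟩
      ext g
      simp only [Finset.mem_filter, Finset.mem_univ, true_and]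
      rw [hf]
      rfl
  rw [himg]
  rw [Finset.card_image_of_injOn, Finset.card_univ, Fintype.card_fin]
  intro i _ j _ hij
  obtain ⟨f, hf⟩ := d.c_cycle i
  have hfi : f ∈ d.c i := by rw [hf]; exact ⟨0, rfl⟩
  simp only at hij
  have : f ∈ Finset.univ.filter (fun x => x ∈ d.c i) := by simp [hfi]
  rw [hij] at this
  have hfj : f ∈ d.c j := by simpa using this
  exact d.c_unique hfi hfj

/-- the number of edges equals the number of non-tail flags in `c 0`. -/
lemma card_edges :
    ((Finset.univ.filter (fun f : d.F => d.inv f ≠ f)).image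
      (fun f => s(f, d.inv f))).card = d.EF0.card := by
  symm
  apply Finset.card_bij (fun x _ => s(x, d.inv x))
  · intro x hx
    rw [d.mem_EF0] at hx
    exact Finset.mem_image_of_mem _ (by simp [hx.2])
  · intro x hx y hy hxy
    rw [d.mem_EF0] at hx hy
    rw [Sym2.eq_iff] at hxy
    rcases hxy with ⟨h1, _⟩ | ⟨h1, h2⟩
    · exact h1
    · exfalso
      subst h1
      exact d.inv_notMem_c0 hy.1 hy.2 hx.1
  · intro e he
    simp only [Finset.mem_image, Finset.mem_filter, Finset.mem_univ, true_and] at he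
    obtain ⟨f, hnt, rfl⟩ := he
    by_cases hmem : f ∈ d.c 0
    · exact ⟨f, d.mem_EF0.mpr ⟨hmem, hnt⟩, rfl⟩
    · refine ⟨d.inv f, d.mem_EF0.mpr ⟨d.inv_mem_c0 hmem, ?_⟩, ?_⟩
      · rw [d.inv_invol]
        intro h
        exact hmem (h ▸ d.inv_mem_c0 hmem)
      · rw [d.inv_invol, Sym2.eq_swap]

/-- genus zero, restated. -/
lemma genus_zero' : Fintype.card d.V + (r + 1) = d.EF0.card + 2 := by
  have := d.genus_zero
  rwa [d.card_cycles, d.card_edges] at this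

end DecoratedCactus

namespace DecoratedCactus

open Function Finset

variable {r : ℕ} (d : DecoratedCactus r)

noncomputable def idx (x : d.F) : Fin (r + 1) := (d.exists_mem_c (d.inv x)).choose

lemma idx_spec (x : d.F) : d.inv x ∈ d.c (d.idx x) := (d.exists_mem_c (d.inv x)).choose_spec

lemma idx_eq {x : d.F} {i : Fin (r+1)} (h : d.inv x ∈ d.c i) : d.idx x = i :=
  d.c_unique (d.idx_spec x) h

noncomputable def Sblk (i : Fin (r+1)) : ℕ :=
  ∑ x ∈ d.EF0.filter (fun x => d.idx x = i), d.firstPassage (d.tau x) x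

lemma Sblk_zero : d.Sblk 0 = 0 := by
  unfold Sblk
  rw [Finset.filter_false_of_mem, Finset.sum_empty]
  intro x hx
  rw [d.mem_EF0] at hx
  exact fun h0 => d.idx_ne_zero hx.1 hx.2 (h0 ▸ d.idx_spec x) rfl

lemma Sblk_ge {i : Fin (r+1)} (hi : i ≠ 0) : (d.c 0).ncard ≤ d.Sblk i := by
  unfold Sblk
  set B := d.EF0.filter (fun x => d.idx x = i) with hB
  have hBmem : ∀ x ∈ B, x ∈ d.c 0 := by
    intro x hx
    rw [hB, Finset.mem_filter, d.mem_EF0] at hx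
    exact hx.1.1
  have hmemB : ∀ x ∈ B, x ∈ d.c 0 ∧ d.inv x ≠ x ∧ d.idx x = i := by
    intro x hx
    rw [hB, Finset.mem_filter, d.mem_EF0] at hx
    exact ⟨hx.1.1, hx.1.2, hx.2⟩
  have htauB : ∀ x ∈ B, d.tau x ∈ B := by
    intro x hx
    obtain ⟨hx0, hxnt, hxi⟩ := hmemB x hx
    obtain ⟨ht0, htnt⟩ := d.tau_mem hx0 hxnt
    rw [hB, Finset.mem_filter, d.mem_EF0]
    refine ⟨⟨ht0, htnt⟩, ?_⟩
    apply d.idx_eq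
    rw [d.inv_tau]
    exact d.sf_mem (hxi ▸ d.idx_spec x)
  have htinj : ∀ x ∈ B, ∀ y ∈ B, d.tau x = d.tau y → x = y :=
    fun x _ y _ h => d.tau_inj h
  have hdvd := d.dvd_sum_fp_left B hBmem d.tau htauB htinj
  -- nonempty
  obtain ⟨g, hg⟩ := d.c_cycle i
  have hgi : g ∈ d.c i := by rw [hg]; exact ⟨0, rfl⟩
  have hgn0 : g ∉ d.c 0 := fun h => hi (d.c_unique hgi h)
  have hinvg : d.inv g ∈ d.c 0 := d.inv_mem_c0 hgn0
  have hmem : d.inv g ∈ B := by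
    rw [hB, Finset.mem_filter, d.mem_EF0]
    refine ⟨⟨hinvg, ?_⟩, d.idx_eq (by rw [d.inv_invol]; exact hgi)⟩
    rw [d.inv_invol]
    intro h
    exact hgn0 (h ▸ hinvg)
  have hpos : 1 ≤ ∑ x ∈ B, d.firstPassage (d.tau x) x := by
    have h1 : 1 ≤ d.firstPassage (d.tau (d.inv g)) (d.inv g) := by
      obtain ⟨hx0, hxnt, _⟩ := hmemB _ hmem
      exact (d.fp_spec (d.tau_mem hx0 hxnt).1 hx0).1
    calc 1 ≤ d.firstPassage (d.tau (d.inv g)) (d.inv g) := h1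
      _ ≤ ∑ x ∈ B, d.firstPassage (d.tau x) x :=
        Finset.single_le_sum (f := fun x => d.firstPassage (d.tau x) x)
          (fun x _ => Nat.zero_le _) hmem
  exact Nat.le_of_dvd (by omega) hdvd

lemma vertex_fiber_ge (v : d.V) :
    (d.c 0).ncard ≤ ∑ x ∈ d.C0.filter (fun x => d.lam x = v), d.firstPassage x (d.Rf x) := by
  set B := d.C0.filter (fun x => d.lam x = v) with hB
  have hBmem : ∀ x ∈ B, x ∈ d.c 0 := by
    intro x hx
    rw [hB, Finset.mem_filter, d.mem_C0] at hx
    exact hx.1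
  have hRB : ∀ x ∈ B, d.Rf x ∈ B := by
    intro x hx
    rw [hB, Finset.mem_filter, d.mem_C0] at hx ⊢
    exact ⟨d.Rf_mem hx.1, by rw [d.lam_Rf]; exact hx.2⟩
  have hRinj : ∀ x ∈ B, ∀ y ∈ B, d.Rf x = d.Rf y → x = y :=
    fun x hx y hy h => d.Rf_injOn (hBmem x hx) (hBmem y hy) h
  have hdvd := d.dvd_sum_fp_right B hBmem d.Rf hRB hRinj
  obtain ⟨x₀, hx₀, hlam⟩ := d.lam_surj_c0 v
  have hmem : x₀ ∈ B := by
    rw [hB, Finset.mem_filter, d.mem_C0]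
    exact ⟨hx₀, hlam⟩
  have hpos : 1 ≤ ∑ x ∈ B, d.firstPassage x (d.Rf x) := by
    calc 1 ≤ d.firstPassage x₀ (d.Rf x₀) := (d.fp_spec hx₀ (d.Rf_mem hx₀)).1
      _ ≤ _ := Finset.single_le_sum (f := fun x => d.firstPassage x (d.Rf x))
          (fun x _ => Nat.zero_le _) hmem
  exact Nat.le_of_dvd (by omega) hdvd

/-- the central bound: the total block sum is at most `n * r`. -/
lemma Stot_le : ∑ x ∈ d.EF0, d.firstPassage (d.tau x) x ≤ (d.c 0).ncard * r := by
  set n := (d.c 0).ncard with hn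
  set E := d.EF0.card with hE
  set A := ∑ x ∈ d.C0, d.firstPassage x (d.Rf x) with hA
  set Stot := ∑ x ∈ d.EF0, d.firstPassage (d.tau x) x with hStot
  -- vertex fiber bound
  have hAge : n * Fintype.card d.V ≤ A := by
    have hfib := Finset.sum_fiberwise d.C0 d.lam (fun x => d.firstPassage x (d.Rf x))
    rw [hA, ← hfib]
    calc n * Fintype.card d.V = ∑ _v : d.V, n := by
          rw [Finset.sum_const, Finset.card_univ, smul_eq_mul, Nat.mul_comm]
      _ ≤ _ := Finset.sum_le_sum (fun v _ => d.vertex_fiber_ge v)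
  -- split A
  have hsplit : A = d.TF.card + ∑ x ∈ d.EF0, d.firstPassage x (d.Rf x) := by
    rw [hA, ← Finset.sum_filter_add_sum_filter_not d.C0 (fun x => d.inv x = x)]
    congr 1
    rw [Finset.sum_congr rfl (fun x hx => ?_), Finset.sum_const, smul_eq_mul, Nat.mul_one]
    · rfl
    rw [Finset.mem_filter] at hx
    exact d.fp_tail (d.mem_C0.mp hx.1) hx.2
  -- complement identity
  have hcomp : (∑ x ∈ d.EF0, d.firstPassage x (d.Rf x)) + Stot = E * (n + 1) := by
    rw [hStot, ← Finset.sum_add_distrib]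
    rw [Finset.sum_congr rfl (fun x hx => ?_), Finset.sum_const, smul_eq_mul]
    rw [d.mem_EF0] at hx
    exact d.fp_nontail hx.1 hx.2
  have hTE : d.TF.card + E = n := by
    rw [hn, d.ncard_c0_eq, d.card_split, hE]
  have hgenus : Fintype.card d.V + r = E + 1 := by
    have := d.genus_zero'
    omega
  -- combine
  have key : n * Fintype.card d.V + Stot ≤ n * (E + 1) := by
    calc n * Fintype.card d.V + Stot ≤ A + Stot := Nat.add_le_add_right hAge _
      _ = d.TF.card + ((∑ x ∈ d.EF0, d.firstPassage x (d.Rf x)) + Stot) := by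
          rw [hsplit, Nat.add_assoc]
      _ = d.TF.card + E * (n + 1) := by rw [hcomp]
      _ = (d.TF.card + E) + E * n := by ring
      _ = n + E * n := by rw [hTE]
      _ = n * (E + 1) := by ring
  have hexp : n * (E + 1) = n * Fintype.card d.V + n * r := by
    rw [← hgenus]; ring
  rw [hexp] at key
  exact Nat.le_of_add_le_add_left key

end DecoratedCactus

namespace DecoratedCactus

open Function Finset

variable {r : ℕ} (d : DecoratedCactus r)

lemma Sblk_eq {i : Fin (r+1)} (hi : i ≠ 0) : d.Sblk i = (d.c 0).ncard := by
  set n := (d.c 0).ncard with hn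
  have hge := d.Sblk_ge hi
  have hr0 : r ≠ 0 := by
    rintro rfl
    exact hi (by omega)
  obtain ⟨r', hr'⟩ : ∃ r', r = r' + 1 := ⟨r - 1, by omega⟩
  have htot : ∑ i' : Fin (r+1), d.Sblk i'
      = ∑ x ∈ d.EF0, d.firstPassage (d.tau x) x := by
    unfold Sblk
    exact Finset.sum_fiberwise _ _ _
  have hle' : ∑ i' : Fin (r+1), d.Sblk i' ≤ n * r := htot ▸ d.Stot_le
  have h0mem : (0 : Fin (r+1)) ∈ Finset.univ.erase i :=
    Finset.mem_erase.mpr ⟨Ne.symm hi, Finset.mem_univ _⟩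
  have hsplit : ∑ i' : Fin (r+1), d.Sblk i'
      = d.Sblk i + (d.Sblk 0 + ∑ i' ∈ (Finset.univ.erase i).erase 0, d.Sblk i') := by
    rw [Finset.add_sum_erase _ d.Sblk h0mem, Finset.add_sum_erase _ d.Sblk (Finset.mem_univ i)]
  have hcard : ((Finset.univ.erase i).erase 0).card = r' := by
    rw [Finset.card_erase_of_mem h0mem, Finset.card_erase_of_mem (Finset.mem_univ i),
      Finset.card_univ, Fintype.card_fin]
    omega
  have hrest : r' * n ≤ ∑ i' ∈ (Finset.univ.erase i).erase 0, d.Sblk i' := by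
    have h := Finset.card_nsmul_le_sum ((Finset.univ.erase i).erase 0) d.Sblk n
      (fun x hx => d.Sblk_ge (Finset.mem_erase.mp hx).1)
    rwa [hcard, smul_eq_mul] at h
  have hz := d.Sblk_zero
  have hmul : n * r = r' * n + n := by rw [hr']; ring
  rw [hmul] at hle'
  rw [hsplit, hz] at hle'
  omega

end DecoratedCactus

theorem DecoratedCactus.sum_firstPassage_aux {r : ℕ} (d : DecoratedCactus r)
    (i : Fin (r + 1)) (hi : i ≠ 0) (f₀ : d.F) (hf₀ : f₀ ∈ d.c i)
    (l : ℕ) (hl : (d.c i).ncard = l + 1) :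
    (∑ j ∈ Finset.range l,
        d.firstPassage (d.inv ((fun x => d.rot (d.inv x))^[j + 1] f₀))
          (d.inv ((fun x => d.rot (d.inv x))^[j] f₀)))
      + d.firstPassage (d.inv f₀) (d.inv ((fun x => d.rot (d.inv x))^[l] f₀))
    = (d.c 0).ncard := by
  simp only [d.sf_def]
  have hp : Function.minimalPeriod d.sf f₀ = l + 1 := by rw [d.minPeriod_eq hf₀, hl]
  have hfj : ∀ j : ℕ, d.sf^[j] f₀ ∈ d.c i := fun j => d.iterate_mem hf₀ j
  have hfj0 : ∀ j : ℕ, d.sf^[j] f₀ ∉ d.c 0 := fun j h => hi (d.c_unique (hfj j) h)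
  have hinv_a : ∀ j : ℕ, d.inv (d.inv (d.sf^[j] f₀)) = d.sf^[j] f₀ := fun j => d.inv_invol _
  have haj : ∀ j : ℕ, d.inv (d.sf^[j] f₀) ∈ d.c 0 := fun j => d.inv_mem_c0 (hfj0 j)
  have hajnt : ∀ j : ℕ, ¬ d.inv (d.inv (d.sf^[j] f₀)) = d.inv (d.sf^[j] f₀) := by
    intro j h
    rw [hinv_a j] at h
    exact hfj0 j (h ▸ haj j)
  have hidx : ∀ j : ℕ, d.idx (d.inv (d.sf^[j] f₀)) = i := by
    intro j
    apply d.idx_eq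
    rw [hinv_a j]
    exact hfj j
  have hainj : ∀ x ∈ Finset.range (l+1), ∀ y ∈ Finset.range (l+1),
      d.inv (d.sf^[x] f₀) = d.inv (d.sf^[y] f₀) → x = y := by
    intro x hx y hy h
    have h2 : d.sf^[x] f₀ = d.sf^[y] f₀ := d.inv_inj h
    refine Function.iterate_injOn_Iio_minimalPeriod ?_ ?_ h2 <;>
      · rw [Set.mem_Iio, hp]
        simp only [Finset.mem_range] at hx hy
        omega
  have himg : d.EF0.filter (fun x => d.idx x = i)
      = (Finset.range (l+1)).image (fun j => d.inv (d.sf^[j] f₀)) := by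
    ext x
    simp only [Finset.mem_filter, Finset.mem_image, Finset.mem_range, d.mem_EF0]
    constructor
    · rintro ⟨⟨hx0, hxnt⟩, hxi⟩
      have hinvx : d.inv x ∈ d.c i := hxi ▸ d.idx_spec x
      rw [d.c_eq_orbit hf₀] at hinvx
      obtain ⟨m, hm⟩ := hinvx
      refine ⟨m % (l+1), Nat.mod_lt _ (by omega), ?_⟩
      have hmod : d.sf^[m % (l+1)] f₀ = d.sf^[m] f₀ := by
        rw [← hp]
        exact Function.iterate_mod_minimalPeriod_eq
      rw [hmod, hm, d.inv_invol]
    · rintro ⟨j, _, rfl⟩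
      exact ⟨⟨haj j, hajnt j⟩, hidx j⟩
  have htau_a : ∀ j : ℕ, d.tau (d.inv (d.sf^[j] f₀)) = d.inv (d.sf^[j+1] f₀) := by
    intro j
    unfold tau
    rw [hinv_a j, Function.iterate_succ_apply']
  have hblk := d.Sblk_eq hi
  unfold Sblk at hblk
  rw [himg, Finset.sum_image hainj] at hblk
  have key : ∑ j ∈ Finset.range (l+1),
      d.firstPassage (d.inv (d.sf^[j+1] f₀)) (d.inv (d.sf^[j] f₀)) = (d.c 0).ncard := by
    rw [← hblk]
    exact Finset.sum_congr rfl (fun j _ => by rw [htau_a j])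
  rw [Finset.sum_range_succ] at key
  have hper : d.sf^[l+1] f₀ = f₀ := by
    rw [← hp]
    exact Function.isPeriodicPt_minimalPeriod d.sf f₀
  rw [hper] at key
  exact key


/-- Lemma 8.4.  Let `c i` (`i ≠ 0`) be a cycle with `l + 1` flags,
`f₀ ∈ c i` and `f_j := (N∘ι)^j f₀`.  Then, with respect to the cyclic order of `c 0`,
`ι f₀ > ι f₁ > ⋯ > ι f_l > ι f₀`; i.e. the first-passage distances
`d(ι f_{j+1}, ι f_j)` (`0 ≤ j < l`) together with `d(ι f₀, ι f_l)` add up to `# c 0`. -/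
theorem DecoratedCactus.sum_firstPassage {r : ℕ} (d : DecoratedCactus r)
    (i : Fin (r + 1)) (hi : i ≠ 0) (f₀ : d.F) (hf₀ : f₀ ∈ d.c i)
    (l : ℕ) (hl : (d.c i).ncard = l + 1) :
    (∑ j ∈ Finset.range l,
        d.firstPassage (d.inv ((fun x => d.rot (d.inv x))^[j + 1] f₀))
          (d.inv ((fun x => d.rot (d.inv x))^[j] f₀)))
      + d.firstPassage (d.inv f₀) (d.inv ((fun x => d.rot (d.inv x))^[l] f₀))
    = (d.c 0).ncard := by
  exact d.sum_firstPassage_aux i hi f₀ hf₀ l hl
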